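/- Let A = {a_1,...,a_p} and B = {b_1,...,b_q} minimally generate numerical semigroups ⟨A⟩ and ⟨B⟩, and let k_1 ∈ ⟨B⟩\B, k_2 ∈ ⟨A⟩\A with gcd(k_1,k_2)=1. Then the Frobenius number of the numerical semigroup ⟨C⟩ generated by C = k_1A ∪ k_2B is F_C = k_1·F_A + k_2·F_B + k_1·k_2. -/

import Mathlib

def NS (A : Set ℕ) : AddSubmonoid ℕ := AddSubmonoid.closure A

def IsFrobenius (S : AddSubmonoid ℕ) (F : ℕ) : Prop :=
  F ∉ S ∧ ∀ m : ℕ, F < m → m ∈ S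

def MinimallyGenerates (A : Set ℕ) : Prop :=
  ∀ a ∈ A, a ∉ AddSubmonoid.closure (A \ {a})

def glueGens (A B : Set ℕ) (k1 k2 : ℕ) : Set ℕ :=
  (fun a => k1 * a) '' A ∪ (fun b => k2 * b) '' B

lemma mem_glue (A B : Set ℕ) (k1 k2 n : ℕ) :
    n ∈ NS (glueGens A B k1 k2) ↔ ∃ x ∈ NS A, ∃ y ∈ NS B, k1 * x + k2 * y = n := by
  unfold NS glueGens
  have e1 : (fun a => k1 * a) '' A = ⇑(AddMonoidHom.mulLeft k1) '' A := rfl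
  have e2 : (fun b => k2 * b) '' B = ⇑(AddMonoidHom.mulLeft k2) '' B := rfl
  rw [AddSubmonoid.closure_union, e1, e2,
    ← AddMonoidHom.map_mclosure (AddMonoidHom.mulLeft k1) A,
    ← AddMonoidHom.map_mclosure (AddMonoidHom.mulLeft k2) B,
    AddSubmonoid.mem_sup]
  simp only [AddSubmonoid.mem_map, AddMonoidHom.coe_mulLeft]
  constructor
  · rintro ⟨u, ⟨x, hx, rfl⟩, v, ⟨y, hy, rfl⟩, rfl⟩
    exact ⟨x, hx, y, hy, rfl⟩
  · rintro ⟨x, hx, y, hy, rfl⟩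
    exact ⟨k1 * x, ⟨x, hx, rfl⟩, k2 * y, ⟨y, hy, rfl⟩, rfl⟩

theorem frobenius_of_gluing (A B : Finset ℕ) (FA FB k1 k2 : ℕ)
    (hAmin : MinimallyGenerates (A : Set ℕ)) (hBmin : MinimallyGenerates (B : Set ℕ))
    (hFA : IsFrobenius (NS (A : Set ℕ)) FA) (hFB : IsFrobenius (NS (B : Set ℕ)) FB)
    (hk1B : k1 ∈ NS (B : Set ℕ)) (hk1nB : k1 ∉ B)
    (hk2A : k2 ∈ NS (A : Set ℕ)) (hk2nA : k2 ∉ A)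
    (hcop : Nat.Coprime k1 k2) :
    IsFrobenius (NS (glueGens (A : Set ℕ) (B : Set ℕ) k1 k2)) (k1 * FA + k2 * FB + k1 * k2) := by
  obtain ⟨hFAn, hFAgt⟩ := hFA
  obtain ⟨hFBn, hFBgt⟩ := hFB
  have hk1ne1 : k1 ≠ 1 := by
    rintro rfl
    exact hFBn (by simpa using (NS (B : Set ℕ)).nsmul_mem hk1B FB)
  have hk2ne1 : k2 ≠ 1 := by
    rintro rfl
    exact hFAn (by simpa using (NS (A : Set ℕ)).nsmul_mem hk2A FA)
  have hk1ne0 : k1 ≠ 0 := by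
    rintro rfl
    exact hk2ne1 (by simpa [Nat.Coprime] using hcop)
  have hk2ne0 : k2 ≠ 0 := by
    rintro rfl
    exact hk1ne1 (by simpa [Nat.Coprime] using hcop)
  have hk1 : 2 ≤ k1 := by omega
  have hk2 : 2 ≤ k2 := by omega
  constructor
  · -- F ∉ S
    rw [mem_glue]
    rintro ⟨x, hx, y, hy, hxy⟩
    have hmod : x ≡ FA [MOD k2] := by
      have e : k1 * x + k2 * y = k1 * FA + k2 * (FB + k1) := by rw [hxy]; ring
      have h1 : k1 * x ≡ k1 * FA [MOD k2] := by
        show k1 * x % k2 = k1 * FA % k2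
        calc k1 * x % k2 = (k1 * x + k2 * y) % k2 := (Nat.add_mul_mod_self_left _ _ _).symm
          _ = (k1 * FA + k2 * (FB + k1)) % k2 := by rw [e]
          _ = k1 * FA % k2 := Nat.add_mul_mod_self_left _ _ _
      exact Nat.ModEq.cancel_left_of_coprime hcop.symm h1
    rcases lt_trichotomy x FA with hlt | heq | hgt
    · obtain ⟨s, hs⟩ := (Nat.modEq_iff_dvd' hlt.le).mp hmod
      rw [mul_comm] at hs
      have : FA = x + s • k2 := by simp only [smul_eq_mul]; omega
      exact hFAn (this ▸ (NS (A : Set ℕ)).add_mem hx ((NS (A : Set ℕ)).nsmul_mem hk2A s))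
    · exact hFAn (heq ▸ hx)
    · obtain ⟨s, hs⟩ := (Nat.modEq_iff_dvd' hgt.le).mp hmod.symm
      have hx' : x = FA + k2 * s := by omega
      have hs1 : 1 ≤ s := by
        rcases Nat.eq_zero_or_pos s with rfl | h
        · omega
        · exact h
      -- k1 * (FA + k2*s) + k2*y = k1*FA + k2*FB + k1*k2  ⇒  y + k1*s = FB + k1
      have key : y + k1 * s = FB + k1 := by
        have h2 : k2 * (y + k1 * s) = k2 * (FB + k1) := by
          have := hxy
          rw [hx'] at this
          ring_nf at this ⊢
          omega
        exact Nat.eq_of_mul_eq_mul_left (by omega) h2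
      have : FB = y + (s - 1) • k1 := by simp [smul_eq_mul]; nlinarith [Nat.sub_add_cancel hs1]
      exact hFBn (this ▸ (NS (B : Set ℕ)).add_mem hy ((NS (B : Set ℕ)).nsmul_mem hk1B (s-1)))
  · -- every m > F is in S
    intro m hm
    rw [mem_glue]
    obtain ⟨i, -, hi⟩ := Nat.exists_mul_mod_eq_one_of_coprime hcop (by omega)
    obtain ⟨c2, hc2⟩ : ∃ c, k2 = c + 1 := ⟨k2 - 1, by omega⟩
    set d := m - k1 * (FA + 1) with hd
    have h6 : k1 * (FA + 1) + k1 * c2 = k1 * FA + k1 * k2 := by rw [hc2]; ring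
    have hdpos : k1 * (FA + 1) ≤ m := by omega
    set t := (d * i) % k2 with ht
    have htlt : t < k2 := Nat.mod_lt _ (by omega)
    have htc : k1 * t ≤ k1 * c2 := Nat.mul_le_mul_left _ (by omega)
    have hdt : k1 * t ≤ d := by omega
    have hdiv : k2 ∣ d - k1 * t := by
      have hmod : (k1 * t) % k2 = d % k2 := by
        calc (k1 * t) % k2 = (k1 * (d * i)) % k2 := by
              rw [ht, Nat.mul_mod, Nat.mod_mod_of_dvd _ dvd_rfl, ← Nat.mul_mod]
          _ = (d * (k1 * i)) % k2 := by ring_nf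
          _ = d % k2 := by rw [Nat.mul_mod, hi, mul_one, Nat.mod_mod_of_dvd _ dvd_rfl]
      exact (Nat.modEq_iff_dvd' hdt).mp hmod
    obtain ⟨v, hv⟩ := hdiv
    refine ⟨FA + 1 + t, hFAgt _ (by omega), v, hFBgt _ ?_, ?_⟩
    · -- FB < v
      have : k2 * FB < k2 * v := by omega
      exact lt_of_mul_lt_mul_left this (Nat.zero_le _)
    · -- k1 * (FA + 1 + t) + k2 * v = m
      have h5 : k1 * (FA + 1 + t) = k1 * (FA + 1) + k1 * t := by ring
      omega
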